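/- Let a(n, k) ≤ b(n, k) be coefficients in [0,1] and define g_n(x) = Σ_{k=0}^{n} C(n,k)·a(n,k)·x^k(1−x)^{n−k} and h_n(x) = Σ_{k=0}^{n} C(n,k)·b(n,k)·x^k(1−x)^{n−k}. If h_n(x) − g_n(x) ≤ C·n^(−ρ/2) for all x ∈ [0,1], then for all 1 ≤ k ≤ n−1, b(n,k) − a(n,k) ≤ C·√(π/2)·e²·n^((1−ρ)/2), and b(n,0) − a(n,0) ≤ C·n^(−ρ/2), b(n,n) − a(n,n) ≤ C·n^(−ρ/2). -/

import Mathlib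

open Real Finset
open Nat Filter Topology

lemma stirlb (m : ℕ) (hm : 1 ≤ m) : Real.sqrt π ≤ Stirling.stirlingSeq m := by
  obtain ⟨m, rfl⟩ := Nat.exists_eq_add_of_le hm
  have ha := Stirling.stirlingSeq'_antitone
  have ht : Tendsto (Stirling.stirlingSeq ∘ Nat.succ) atTop (𝓝 (Real.sqrt π)) :=
    Stirling.tendsto_stirlingSeq_sqrt_pi.comp (tendsto_add_atTop_nat 1)
  simpa [Nat.add_comm] using ha.le_of_tendsto ht m

lemma stirub (m : ℕ) (hm : 1 ≤ m) : Stirling.stirlingSeq m ≤ Real.exp 1 / Real.sqrt 2 := by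
  obtain ⟨m, rfl⟩ := Nat.exists_eq_add_of_le hm
  have := Stirling.stirlingSeq'_antitone (Nat.zero_le m)
  simpa [Nat.add_comm, Stirling.stirlingSeq_one] using this

lemma facteq (m : ℕ) (hm : 1 ≤ m) :
    (m ! : ℝ) = Stirling.stirlingSeq m * (Real.sqrt (2*m) * ((m:ℝ)/Real.exp 1)^m) := by
  have hm0 : (0:ℝ) < m := by exact_mod_cast hm
  rw [Stirling.stirlingSeq, div_mul_cancel₀]
  positivity

lemma alg (s q qk qm p w wk wm EE : ℝ) (hqk : qk ≠ 0) (hqm : qm ≠ 0) (hwk : wk ≠ 0) (hwm : wm ≠ 0) (hEE : EE ≠ 0)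
    (hkey : q * p = qk * qm) :
    s * w / (EE^2 * (wk*wm)) = s * (w*q)/(EE*(wk*qk)*(EE*(wm*qm))) * p := by
  field_simp
  linear_combination (-(s*w)) * hkey

lemma term_lb (k m : ℕ) (hk : 1 ≤ k) (hm : 1 ≤ m) :
    2 * (Real.sqrt 2 * Real.sqrt π) / (Real.exp 2 * Real.sqrt (k+m:ℕ)) ≤
      (((k+m:ℕ)).choose k : ℝ) * ((k:ℝ)/(k+m:ℕ))^k * ((m:ℝ)/(k+m:ℕ))^m := by
  set n : ℕ := k + m with hn
  have hk0 : (0:ℝ) < k := by exact_mod_cast hk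
  have hm0 : (0:ℝ) < m := by exact_mod_cast hm
  have hn0 : (0:ℝ) < n := by positivity
  set e : ℝ := Real.exp 1 with hee
  have he : 0 < e := Real.exp_pos 1
  set E : ℝ := e / Real.sqrt 2 with hE
  have hE0 : 0 < E := by positivity
  have hfn : Real.sqrt π * (Real.sqrt (2*n) * ((n:ℝ)/e)^n) ≤ (n ! : ℝ) := by
    rw [facteq n (le_trans hk (Nat.le_add_right k m))]
    exact mul_le_mul_of_nonneg_right (stirlb n (le_trans hk (Nat.le_add_right k m))) (by positivity)
  have hfk : (k ! : ℝ) ≤ E * (Real.sqrt (2*k) * ((k:ℝ)/e)^k) := by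
    rw [facteq k hk]
    exact mul_le_mul_of_nonneg_right (stirub k hk) (by positivity)
  have hfm : (m ! : ℝ) ≤ E * (Real.sqrt (2*m) * ((m:ℝ)/e)^m) := by
    rw [facteq m hm]
    exact mul_le_mul_of_nonneg_right (stirub m hm) (by positivity)
  have hchoose : (n.choose k : ℝ) = (n ! : ℝ) / ((k ! : ℝ) * (m ! : ℝ)) := by
    rw [Nat.cast_choose ℝ (Nat.le_add_right k m), show n - k = m by omega]
  have key : ((n:ℝ)/e)^n * (((k:ℝ)/n)^k * ((m:ℝ)/n)^m) = ((k:ℝ)/e)^k * ((m:ℝ)/e)^m := by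
    have he' : e ≠ 0 := ne_of_gt he
    have hn' : (n:ℝ) ≠ 0 := ne_of_gt hn0
    field_simp [div_pow]
    have hN : ((k+m:ℕ):ℝ) ≠ 0 := ne_of_gt hn0
    have h1 : (((k+m:ℕ):ℝ)/e)*((k:ℝ)/((k+m:ℕ):ℝ)) = (k:ℝ)/e := by
      rw [_root_.div_mul_div_comm, mul_comm ((k+m:ℕ):ℝ), mul_div_mul_right _ _ hN]
    have h2 : (((k+m:ℕ):ℝ)/e)*((m:ℝ)/((k+m:ℕ):ℝ)) = (m:ℝ)/e := by
      rw [_root_.div_mul_div_comm, mul_comm ((k+m:ℕ):ℝ), mul_div_mul_right _ _ hN]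
    calc _ = ((((k+m:ℕ):ℝ)/e)*((k:ℝ)/((k+m:ℕ):ℝ)))^k
          * ((((k+m:ℕ):ℝ)/e)*((m:ℝ)/((k+m:ℕ):ℝ)))^m := by ring
      _ = _ := by rw [h1, h2]
  have hP : (0:ℝ) ≤ ((k:ℝ)/n)^k * ((m:ℝ)/n)^m := by positivity
  have step1 : Real.sqrt π * (Real.sqrt (2*n) * ((n:ℝ)/e)^n)
      / (E * (Real.sqrt (2*k) * ((k:ℝ)/e)^k) * (E * (Real.sqrt (2*m) * ((m:ℝ)/e)^m)))
      ≤ (n ! : ℝ) / ((k ! : ℝ) * (m ! : ℝ)) := by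
    apply div_le_div₀ (Nat.cast_nonneg _) hfn
    · positivity
    · exact mul_le_mul hfk hfm (by positivity) (by positivity)
  have step2 : Real.sqrt π * Real.sqrt (2*n) / (E^2 * (Real.sqrt (2*k) * Real.sqrt (2*m)))
      ≤ (n.choose k : ℝ) * ((k:ℝ)/n)^k * ((m:ℝ)/n)^m := by
    rw [hchoose, mul_assoc,
      alg (Real.sqrt π) (((n:ℝ)/e)^n) (((k:ℝ)/e)^k) (((m:ℝ)/e)^m)
        (((k:ℝ)/n)^k * ((m:ℝ)/n)^m) (Real.sqrt (2*n)) (Real.sqrt (2*k)) (Real.sqrt (2*m)) E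
        (by positivity) (by positivity) (by positivity) (by positivity) (ne_of_gt hE0) key]
    exact mul_le_mul_of_nonneg_right step1 hP
  refine le_trans ?_ step2
  -- now pure analysis: 2(√2√π)/(exp 2 · √n) ≤ √π √(2n)/(E²(√(2k)√(2m)))
  have hE2 : E^2 = Real.exp 2 / 2 := by
    rw [hE, div_pow, Real.sq_sqrt (by norm_num : (0:ℝ) ≤ 2), hee, sq, ← Real.exp_add]
    norm_num
  have hD : Real.sqrt (2*k) * Real.sqrt (2*m) ≤ (n:ℝ) := by
    rw [← Real.sqrt_mul (by positivity)]
    have h4 : (2*(k:ℝ))*(2*m) ≤ (n:ℝ)^2 := by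
      have : ((n:ℝ)) = (k:ℝ) + m := by rw [hn]; push_cast; ring
      nlinarith [sq_nonneg ((k:ℝ) - m)]
    calc Real.sqrt ((2*(k:ℝ))*(2*m)) ≤ Real.sqrt ((n:ℝ)^2) := Real.sqrt_le_sqrt h4
      _ = n := Real.sqrt_sq hn0.le
  have hDpos : (0:ℝ) < Real.sqrt (2*k) * Real.sqrt (2*m) := by positivity
  have hsn : Real.sqrt (n:ℝ) * Real.sqrt n = (n:ℝ) := Real.mul_self_sqrt hn0.le
  have hsnpos : (0:ℝ) < Real.sqrt n := Real.sqrt_pos.mpr hn0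
  have h2n : Real.sqrt (2*(n:ℝ)) = Real.sqrt 2 * Real.sqrt n := Real.sqrt_mul (by norm_num) _
  rw [hE2, h2n]
  have heq : 2 * (Real.sqrt 2 * Real.sqrt π) / (Real.exp 2 * Real.sqrt n)
      = Real.sqrt π * (Real.sqrt 2 * Real.sqrt n) / (Real.exp 2 / 2 * (n:ℝ)) := by
    have hexp : Real.exp 2 ≠ 0 := (Real.exp_pos 2).ne'
    rw [div_eq_div_iff (by positivity) (by positivity)]
    linear_combination (-(Real.sqrt 2 * Real.sqrt π * Real.exp 2)) * hsn
  rw [heq]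
  exact div_le_div_of_nonneg_left (by positivity) (by positivity) (by
    exact mul_le_mul_of_nonneg_left hD (by positivity))

theorem stmt7 (n : ℕ) (hn : 1 ≤ n) (a b : ℕ → ℝ) (C ρ : ℝ) (hC : 0 < C) (hρ : 0 < ρ)
    (hcoef : ∀ k ≤ n, 0 ≤ a k ∧ a k ≤ b k ∧ b k ≤ 1)
    (happrox : ∀ x ∈ Set.Icc (0 : ℝ) 1,
      (∑ k ∈ range (n + 1), (Nat.choose n k : ℝ) * b k * x ^ k * (1 - x) ^ (n - k))
        - (∑ k ∈ range (n + 1), (Nat.choose n k : ℝ) * a k * x ^ k * (1 - x) ^ (n - k))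
        ≤ C * (n : ℝ) ^ (-ρ / 2)) :
    (∀ k, 1 ≤ k → k ≤ n - 1 →
        b k - a k ≤ C * Real.sqrt (π / 2) * Real.exp 2 * (n : ℝ) ^ ((1 - ρ) / 2)) ∧
      b 0 - a 0 ≤ C * (n : ℝ) ^ (-ρ / 2) ∧
      b n - a n ≤ C * (n : ℝ) ^ (-ρ / 2) := by
  have hn0 : (0:ℝ) < n := by exact_mod_cast hn
  have hterm : ∀ x ∈ Set.Icc (0:ℝ) 1, ∀ j ∈ range (n+1),
      (n.choose j : ℝ) * (b j - a j) * x^j * (1-x)^(n-j) ≤ C * (n:ℝ)^(-ρ/2) := by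
    intro x hx j hj
    obtain ⟨hx0, hx1⟩ := hx
    have hsum := happrox x ⟨hx0, hx1⟩
    rw [← Finset.sum_sub_distrib] at hsum
    refine le_trans (le_trans (le_of_eq (by ring))
      (Finset.single_le_sum (f := fun i => (n.choose i:ℝ)*b i*x^i*(1-x)^(n-i)
        - (n.choose i:ℝ)*a i*x^i*(1-x)^(n-i)) ?_ hj)) hsum
    intro i hi
    have hc := hcoef i (Nat.lt_succ_iff.mp (Finset.mem_range.mp hi))
    have heq : (n.choose i:ℝ)*b i*x^i*(1-x)^(n-i) - (n.choose i:ℝ)*a i*x^i*(1-x)^(n-i)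
        = (n.choose i:ℝ)*(b i - a i)*(x^i*(1-x)^(n-i)) := by ring
    rw [heq]
    have h1 : (0:ℝ) ≤ b i - a i := sub_nonneg.mpr hc.2.1
    have h2 : (0:ℝ) ≤ x^i*(1-x)^(n-i) := by
      have : (0:ℝ) ≤ 1 - x := by linarith
      positivity
    exact mul_nonneg (mul_nonneg (Nat.cast_nonneg _) h1) h2
  refine ⟨?_, ?_, ?_⟩
  · intro k hk1 hk2
    have hkn : k < n := by omega
    set m := n - k with hm
    have hm1 : 1 ≤ m := by omega
    have hx : (k:ℝ)/n ∈ Set.Icc (0:ℝ) 1 := by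
      constructor
      · positivity
      · rw [div_le_one hn0]; exact_mod_cast hkn.le
    have ht := hterm ((k:ℝ)/n) hx k (Finset.mem_range.mpr (by omega))
    have hlb := term_lb k m hk1 hm1
    rw [show k + m = n from by omega] at hlb
    have h1x : 1 - (k:ℝ)/n = (m:ℝ)/n := by
      rw [hm, Nat.cast_sub hkn.le]
      field_simp
    rw [h1x] at ht
    have hba : (0:ℝ) ≤ b k - a k := sub_nonneg.mpr (hcoef k hkn.le).2.1
    have hLpos : (0:ℝ) < 2 * (Real.sqrt 2 * Real.sqrt π) / (Real.exp 2 * Real.sqrt n) := by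
      have := Real.pi_pos; positivity
    have hsnpos : (0:ℝ) < Real.sqrt n := Real.sqrt_pos.mpr hn0
    have hmain : 2 * (Real.sqrt 2 * Real.sqrt π) / (Real.exp 2 * Real.sqrt n) * (b k - a k)
        ≤ C * (n:ℝ)^(-ρ/2) := by
      calc 2 * (Real.sqrt 2 * Real.sqrt π) / (Real.exp 2 * Real.sqrt n) * (b k - a k)
          ≤ ((n.choose k : ℝ) * ((k:ℝ)/n)^k * ((m:ℝ)/n)^m) * (b k - a k) :=
            mul_le_mul_of_nonneg_right hlb hba
        _ = (n.choose k : ℝ) * (b k - a k) * ((k:ℝ)/n)^k * ((m:ℝ)/n)^(n-k) := by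
            rw [← hm]; ring
        _ ≤ C * (n:ℝ)^(-ρ/2) := ht
    have hba2 : b k - a k ≤ C * (n:ℝ)^(-ρ/2) * (Real.exp 2 * Real.sqrt n)
        / (2 * (Real.sqrt 2 * Real.sqrt π)) := by
      have hpi := Real.pi_pos
      rw [le_div_iff₀ (by positivity)]
      have : (b k - a k) * (2 * (Real.sqrt 2 * Real.sqrt π))
          = 2 * (Real.sqrt 2 * Real.sqrt π) / (Real.exp 2 * Real.sqrt n) * (b k - a k)
            * (Real.exp 2 * Real.sqrt n) := by
        field_simp
      rw [this]
      exact mul_le_mul_of_nonneg_right hmain (by positivity)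
    refine le_trans hba2 ?_
    have hr : (n:ℝ)^((1-ρ)/2) = Real.sqrt n * (n:ℝ)^(-ρ/2) := by
      rw [Real.sqrt_eq_rpow, ← Real.rpow_add hn0]
      ring_nf
    have hpi := Real.pi_gt_three
    have key2 : 1/(2*(Real.sqrt 2 * Real.sqrt π)) ≤ Real.sqrt (π/2) := by
      rw [div_le_iff₀ (by positivity)]
      have h1 : Real.sqrt (π/2) * Real.sqrt 2 = Real.sqrt π := by
        rw [← Real.sqrt_mul (by positivity)]
        norm_num
      have h2 : Real.sqrt π * Real.sqrt π = π := Real.mul_self_sqrt (by positivity)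
      have h3 : Real.sqrt (π/2) * (2*(Real.sqrt 2 * Real.sqrt π)) = 2*π := by
        calc Real.sqrt (π/2) * (2*(Real.sqrt 2 * Real.sqrt π))
            = 2*((Real.sqrt (π/2) * Real.sqrt 2) * Real.sqrt π) := by ring
          _ = 2*(Real.sqrt π * Real.sqrt π) := by rw [h1]
          _ = 2*π := by rw [h2]
      rw [h3]
      linarith
    calc C * (n:ℝ)^(-ρ/2) * (Real.exp 2 * Real.sqrt n) / (2*(Real.sqrt 2 * Real.sqrt π))
        = C * (n:ℝ)^(-ρ/2) * Real.exp 2 * Real.sqrt n * (1/(2*(Real.sqrt 2 * Real.sqrt π))) := by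
          ring
      _ ≤ C * (n:ℝ)^(-ρ/2) * Real.exp 2 * Real.sqrt n * Real.sqrt (π/2) := by
          apply mul_le_mul_of_nonneg_left key2
          positivity
      _ = C * Real.sqrt (π/2) * Real.exp 2 * ((n:ℝ)^((1-ρ)/2)) := by
          rw [hr]; ring
  · have := hterm 0 ⟨le_refl 0, zero_le_one⟩ 0 (Finset.mem_range.mpr (by omega))
    simpa using this
  · have := hterm 1 ⟨zero_le_one, le_refl 1⟩ n (Finset.mem_range.mpr (by omega))
    simpa using this
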